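/- With the recursions x_{i+1}, p_{i+1}, q_{i+1}, g_{i+1} as in the blow-down process (initialized so that 2g₀ - 2 - x₀ + p₀ + q₀ = d - 1), if additionally 2g_i - 2 - x_i ≥ 0 for all i in a range 0 ≤ i ≤ N, then d > p_i + q_i for all 0 ≤ i ≤ N. -/
import Mathlib

lemma two_mul_consec_div (a : ℤ) : 2 * (a * (a - 1) / 2) = a * (a - 1) := by
  have he : Even (a * (a - 1)) := by
    have := Int.even_mul_succ_self (a - 1)
    simpa [mul_comm] using this
  exact Int.two_mul_ediv_two_of_even he

/-- With the blow-down recursions (initialized so that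
    `2g₀ - 2 - x₀ + p₀ + q₀ = d - 1`), if `2gᵢ - 2 - xᵢ ≥ 0` for all `0 ≤ i ≤ N`,
    then `d > pᵢ + qᵢ` for all `0 ≤ i ≤ N`. -/
theorem stmt_14 (x p q g n m : ℕ → ℤ) (d : ℤ) (N : ℕ)
    (hn : ∀ j, 0 ≤ n j) (hm : ∀ j, 0 ≤ m j)
    (h0 : 2 * g 0 - 2 - x 0 + p 0 + q 0 = d - 1)
    (heven : ∀ i, Even i →
      x (i + 1) = x i + (n (i + 1) + 1) * (q i) ^ 2 ∧
      p (i + 1) = p i + (n (i + 1) + 1) * q i ∧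
      q (i + 1) = q i ∧
      g (i + 1) = g i + (n (i + 1) + 1) * (q i * (q i - 1) / 2))
    (hodd : ∀ i, Odd i →
      x (i + 1) = x i + (m (i + 1) + 1) * (p i) ^ 2 ∧
      q (i + 1) = q i + (m (i + 1) + 1) * p i ∧
      p (i + 1) = p i ∧
      g (i + 1) = g i + (m (i + 1) + 1) * (p i * (p i - 1) / 2))
    (hadj : ∀ i, i ≤ N → 0 ≤ 2 * g i - 2 - x i) :
    ∀ i, i ≤ N → p i + q i < d := by
  have inv : ∀ i, 2 * g i - 2 - x i + p i + q i = d - 1 := by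
    intro i
    induction i with
    | zero => exact h0
    | succ i ih =>
      rcases Nat.even_or_odd i with he | ho
      · obtain ⟨hx, hp, hq, hg⟩ := heven i he
        have h2 : 2 * g (i+1) = 2 * g i + (n (i+1) + 1) * (q i * (q i - 1)) := by
          linear_combination 2 * hg + (n (i+1) + 1) * two_mul_consec_div (q i)
        rw [h2, hx, hp, hq] at *
        linarith [ih]
      · obtain ⟨hx, hq, hp, hg⟩ := hodd i ho
        have h2 : 2 * g (i+1) = 2 * g i + (m (i+1) + 1) * (p i * (p i - 1)) := by
          linear_combination 2 * hg + (m (i+1) + 1) * two_mul_consec_div (p i)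
        rw [h2, hx, hp, hq] at *
        linarith [ih]
  intro i hi
  have := hadj i hi
  have := inv i
  linarith
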